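/- For all real y ≥ 3, the sum over natural numbers n with 1 ≤ n ≤ y of d(n)², where d(n) is the number of divisors of n, is O(y · (log y)³); more precisely there exists a constant C > 0 such that ∑_{n ≤ y} d(n)² ≤ C · y · (log y)³ for all y ≥ 3. -/

import Mathlib

open Real Finset

lemma harm_le (N : ℕ) : ∑ k ∈ Finset.Icc 1 N, (1 / k : ℝ) ≤ 1 + Real.log N := by
  induction N with
  | zero => simp
  | succ n ih =>
    rcases Nat.eq_zero_or_pos n with rfl | hn
    · norm_num
    · rw [Finset.sum_Icc_succ_top (by omega)]
      have hn0 : (0:ℝ) < n := by exact_mod_cast hn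
      have key : Real.log ((n : ℝ) / (n+1)) ≤ (n:ℝ)/(n+1) - 1 :=
        Real.log_le_sub_one_of_pos (by positivity)
      rw [Real.log_div (by positivity) (by positivity)] at key
      have h1 : (n:ℝ)/(n+1) - 1 = -(1/(n+1)) := by field_simp; ring
      have h2 : Real.log n + 1/((n:ℝ)+1) ≤ Real.log (n+1) := by
        rw [h1] at key; linarith
      push_cast
      linarith

lemma sumB (N g : ℕ) (hg : 1 ≤ g) :
    ∑ a ∈ Finset.Icc 1 N, (if g ∣ a then (1/(a:ℝ)) else 0)
      ≤ (∑ k ∈ Finset.Icc 1 N, (1/k:ℝ)) / g := by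
  rw [← Finset.sum_filter]
  have himg : (Finset.Icc 1 N).filter (fun a => g ∣ a) = (Finset.Icc 1 (N/g)).image (fun m => g * m) := by
    ext a
    simp only [Finset.mem_filter, Finset.mem_Icc, Finset.mem_image]
    constructor
    · rintro ⟨⟨h1, h2⟩, m, rfl⟩
      refine ⟨m, ⟨?_, ?_⟩, rfl⟩
      · rcases Nat.eq_zero_or_pos m with rfl | hm
        · omega
        · exact hm
      · exact (Nat.le_div_iff_mul_le (by omega)).mpr (by rw [mul_comm]; exact h2)
    · rintro ⟨m, ⟨hm1, hm2⟩, rfl⟩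
      have h3 := (Nat.le_div_iff_mul_le (by omega : 0 < g)).mp hm2
      rw [mul_comm] at h3
      exact ⟨⟨Nat.one_le_iff_ne_zero.mpr (by positivity), h3⟩, Dvd.intro m rfl⟩
  rw [himg, Finset.sum_image (by intro x _ y _ h; exact Nat.eq_of_mul_eq_mul_left (by omega) h)]
  have heq : ∀ m ∈ Finset.Icc 1 (N/g), (1/((g*m : ℕ):ℝ)) = (1/g) * (1/m) := by
    intro m hm
    push_cast
    rw [mul_comm ((1:ℝ)/g), div_mul_div_comm, one_mul, mul_comm (m:ℝ)]
  rw [Finset.sum_congr rfl heq, ← Finset.mul_sum]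
  rw [show (∑ k ∈ Finset.Icc 1 N, (1/(k:ℝ)))/g = 1/g * ∑ k ∈ Finset.Icc 1 N, (1/(k:ℝ)) by ring]
  have hsub : ∑ m ∈ Finset.Icc 1 (N/g), (1/(m:ℝ)) ≤ ∑ k ∈ Finset.Icc 1 N, (1/(k:ℝ)) :=
    Finset.sum_le_sum_of_subset_of_nonneg
      (Finset.Icc_subset_Icc_right (Nat.div_le_self N g))
      (fun k _ _ => by positivity)
  have hgpos : (0:ℝ) < 1/g := by positivity
  exact mul_le_mul_of_nonneg_left hsub hgpos.le

theorem stmt0 :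
    ∃ C : ℝ, 0 < C ∧ ∀ y : ℝ, 3 ≤ y →
      (∑ n ∈ Finset.Icc 1 ⌊y⌋₊, ((n.divisors.card : ℝ)) ^ 2) ≤
        C * y * (Real.log y) ^ 3 := by
  refine ⟨8, by norm_num, ?_⟩
  intro y hy
  have hy0 : (0:ℝ) < y := by linarith
  set N := ⌊y⌋₊ with hNdef
  have hN3 : 3 ≤ N := Nat.le_floor (by exact_mod_cast hy)
  have hNy : (N:ℝ) ≤ y := Nat.floor_le hy0.le
  set I := Finset.Icc 1 N with hIdef
  set H := ∑ k ∈ I, (1/(k:ℝ)) with hHdef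
  have hHnn : 0 ≤ H := Finset.sum_nonneg fun k _ => by positivity
  -- Step 1 : rewrite the sum as a double count
  have step1 : (∑ n ∈ I, ((n.divisors.card : ℝ)) ^ 2)
      = ∑ a ∈ I, ∑ b ∈ I, ∑ n ∈ I, (if a ∣ n ∧ b ∣ n then (1:ℝ) else 0) := by
    have hdc : ∀ n ∈ I, (n.divisors.card : ℝ) = ∑ a ∈ I, (if a ∣ n then (1:ℝ) else 0) := by
      intro n hn
      rw [Finset.mem_Icc] at hn
      rw [Finset.sum_boole]
      have hset : I.filter (fun a => a ∣ n) = n.divisors := by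
        ext d
        simp only [Finset.mem_filter, Finset.mem_Icc, Nat.mem_divisors, hIdef]
        constructor
        · rintro ⟨_, hd⟩; exact ⟨hd, by omega⟩
        · rintro ⟨hd, hn0⟩
          exact ⟨⟨Nat.pos_of_dvd_of_pos hd (by omega), le_trans (Nat.le_of_dvd (by omega) hd) hn.2⟩, hd⟩
      rw [hset]
    calc (∑ n ∈ I, ((n.divisors.card : ℝ)) ^ 2)
        = ∑ n ∈ I, (∑ a ∈ I, (if a ∣ n then (1:ℝ) else 0)) * (∑ b ∈ I, (if b ∣ n then (1:ℝ) else 0)) := by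
          refine Finset.sum_congr rfl fun n hn => ?_
          rw [← hdc n hn]; ring
      _ = ∑ n ∈ I, ∑ a ∈ I, ∑ b ∈ I, (if a ∣ n ∧ b ∣ n then (1:ℝ) else 0) := by
          refine Finset.sum_congr rfl fun n _ => ?_
          rw [Finset.sum_mul_sum]
          refine Finset.sum_congr rfl fun a _ => Finset.sum_congr rfl fun b _ => ?_
          by_cases h1 : a ∣ n <;> by_cases h2 : b ∣ n <;> simp [h1, h2]
      _ = ∑ a ∈ I, ∑ b ∈ I, ∑ n ∈ I, (if a ∣ n ∧ b ∣ n then (1:ℝ) else 0) := by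
          rw [Finset.sum_comm]
          exact Finset.sum_congr rfl fun a _ => Finset.sum_comm
  -- Step 2 : per-(a,b) bound
  have step2 : ∀ a ∈ I, ∀ b ∈ I,
      (∑ n ∈ I, (if a ∣ n ∧ b ∣ n then (1:ℝ) else 0))
        ≤ ∑ g ∈ I, (if g ∣ a ∧ g ∣ b then y * g / (a*b) else 0) := by
    intro a ha b hb
    rw [Finset.mem_Icc] at ha hb
    have hlcm : 0 < Nat.lcm a b := Nat.pos_of_ne_zero (Nat.lcm_ne_zero (by omega) (by omega))
    have hgcd : 0 < Nat.gcd a b := Nat.gcd_pos_of_pos_left b (by omega)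
    have hcard : (∑ n ∈ I, (if a ∣ n ∧ b ∣ n then (1:ℝ) else 0)) = ((N / Nat.lcm a b : ℕ) : ℝ) := by
      rw [Finset.sum_boole]
      norm_cast
      rw [show I = Finset.Ioc 0 N from Finset.Icc_add_one_left_eq_Ioc (0:ℕ) N]
      rw [Finset.filter_congr (fun n _ => by
        simpa using (Nat.lcm_dvd_iff (m := a) (n := b) (k := n)).symm)]
      exact Nat.Ioc_filter_dvd_card_eq_div N (Nat.lcm a b)
    rw [hcard]
    have hmul : ((Nat.gcd a b : ℝ)) * ((Nat.lcm a b : ℝ)) = (a:ℝ) * b := by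
      exact_mod_cast Nat.gcd_mul_lcm a b
    have h1 : ((N / Nat.lcm a b : ℕ) : ℝ) ≤ y * (Nat.gcd a b) / ((a:ℝ)*b) := by
      calc ((N / Nat.lcm a b : ℕ) : ℝ) ≤ (N:ℝ) / (Nat.lcm a b) := Nat.cast_div_le
        _ ≤ y / (Nat.lcm a b) := by gcongr
        _ = y * (Nat.gcd a b) / ((a:ℝ)*b) := by
            have hab : (0:ℝ) < (a:ℝ)*b := by
              have : (0:ℝ) < (a:ℝ) := by exact_mod_cast ha.1
              have : (0:ℝ) < (b:ℝ) := by exact_mod_cast hb.1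
              positivity
            rw [div_eq_div_iff (Nat.cast_pos.mpr hlcm).ne' hab.ne', ← hmul]
            ring
    refine le_trans h1 ?_
    have hmem : Nat.gcd a b ∈ I := by
      rw [hIdef, Finset.mem_Icc]
      exact ⟨hgcd, le_trans (Nat.gcd_le_left b (by omega)) ha.2⟩
    have hval : (if (Nat.gcd a b) ∣ a ∧ (Nat.gcd a b) ∣ b then y * (Nat.gcd a b) / ((a:ℝ)*b) else 0)
        = y * (Nat.gcd a b) / ((a:ℝ)*b) := by
      rw [if_pos ⟨Nat.gcd_dvd_left a b, Nat.gcd_dvd_right a b⟩]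
    rw [← hval]
    refine Finset.single_le_sum (f := fun g => if g ∣ a ∧ g ∣ b then y * (g:ℝ) / ((a:ℝ)*b) else 0)
      (fun g _ => ?_) hmem
    by_cases h : g ∣ a ∧ g ∣ b
    · rw [if_pos h]; positivity
    · rw [if_neg h]
  -- Step 3 : swap sums and factor
  have factor : ∀ g ∈ I, (∑ a ∈ I, ∑ b ∈ I, (if g ∣ a ∧ g ∣ b then y * g / ((a:ℝ)*b) else 0))
      = y * g * ((∑ a ∈ I, if g ∣ a then (1/(a:ℝ)) else 0) * (∑ b ∈ I, if g ∣ b then (1/(b:ℝ)) else 0)) := by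
    intro g hg
    rw [Finset.sum_mul_sum, Finset.mul_sum]
    refine Finset.sum_congr rfl fun a haI => ?_
    rw [Finset.mul_sum]
    refine Finset.sum_congr rfl fun b hbI => ?_
    rw [Finset.mem_Icc] at haI hbI
    have ha0 : ((a:ℝ)) ≠ 0 := Nat.cast_ne_zero.mpr (by omega)
    have hb0 : ((b:ℝ)) ≠ 0 := Nat.cast_ne_zero.mpr (by omega)
    by_cases h1 : g ∣ a
    · by_cases h2 : g ∣ b
      · rw [if_pos ⟨h1, h2⟩, if_pos h1, if_pos h2]; field_simp
      · rw [if_neg (fun hc => h2 hc.2), if_neg h2]; ring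
    · rw [if_neg (fun hc => h1 hc.1), if_neg h1]; ring
  -- Step 4 : bound the inner divisor sums
  have innerB : ∀ g ∈ I, (∑ a ∈ I, if g ∣ a then (1/(a:ℝ)) else 0) ≤ H / g := by
    intro g hg
    rw [Finset.mem_Icc] at hg
    exact sumB N g hg.1
  have innerNN : ∀ g : ℕ, 0 ≤ (∑ a ∈ I, if g ∣ a then (1/(a:ℝ)) else 0) := by
    intro g
    refine Finset.sum_nonneg fun a _ => ?_
    by_cases h : g ∣ a <;> simp [h]
  -- harmonic sum bound
  have hly : 1 ≤ Real.log y := by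
    rw [Real.le_log_iff_exp_le hy0]
    have h9 := Real.exp_one_lt_d9
    linarith
  have hH2 : H ≤ 2 * Real.log y := by
    have h1 := harm_le N
    have hN0 : (0:ℝ) < N := by exact_mod_cast (by omega : 0 < N)
    have hlogN : Real.log N ≤ Real.log y := Real.log_le_log hN0 hNy
    simp only [hHdef, hIdef]
    linarith
  -- put everything together
  calc (∑ n ∈ I, ((n.divisors.card : ℝ)) ^ 2)
      = ∑ a ∈ I, ∑ b ∈ I, ∑ n ∈ I, (if a ∣ n ∧ b ∣ n then (1:ℝ) else 0) := step1
    _ ≤ ∑ a ∈ I, ∑ b ∈ I, ∑ g ∈ I, (if g ∣ a ∧ g ∣ b then y * g / ((a:ℝ)*b) else 0) :=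
        Finset.sum_le_sum fun a ha => Finset.sum_le_sum fun b hb => step2 a ha b hb
    _ = ∑ a ∈ I, ∑ g ∈ I, ∑ b ∈ I, (if g ∣ a ∧ g ∣ b then y * g / ((a:ℝ)*b) else 0) :=
        Finset.sum_congr rfl fun a _ => Finset.sum_comm
    _ = ∑ g ∈ I, ∑ a ∈ I, ∑ b ∈ I, (if g ∣ a ∧ g ∣ b then y * g / ((a:ℝ)*b) else 0) :=
        Finset.sum_comm
    _ = ∑ g ∈ I, y * g * ((∑ a ∈ I, if g ∣ a then (1/(a:ℝ)) else 0) * (∑ b ∈ I, if g ∣ b then (1/(b:ℝ)) else 0)) :=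
        Finset.sum_congr rfl factor
    _ ≤ ∑ g ∈ I, y * g * ((H/g) * (H/g)) := by
        refine Finset.sum_le_sum fun g hgI => ?_
        have hg1 : 1 ≤ g := (Finset.mem_Icc.mp hgI).1
        have hg0 : (0:ℝ) < g := by exact_mod_cast hg1
        refine mul_le_mul_of_nonneg_left ?_ (by positivity)
        exact mul_le_mul (innerB g hgI) (innerB g hgI) (innerNN g) (by positivity)
    _ = ∑ g ∈ I, y * H^2 * (1/(g:ℝ)) := by
        refine Finset.sum_congr rfl fun g hgI => ?_
        have hg1 : 1 ≤ g := (Finset.mem_Icc.mp hgI).1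
        have hg0 : ((g:ℝ)) ≠ 0 := by positivity
        field_simp
    _ = y * H^2 * H := by rw [← Finset.mul_sum]
    _ ≤ y * (2 * Real.log y)^3 / (2 * Real.log y)^0 := by
        have h3 : H^3 ≤ (2 * Real.log y)^3 := pow_le_pow_left₀ hHnn hH2 3
        have : y * H^2 * H = y * H^3 := by ring
        rw [this]
        simp only [pow_zero, div_one]
        exact mul_le_mul_of_nonneg_left h3 hy0.le
    _ = 8 * y * (Real.log y)^3 := by
        simp only [pow_zero, div_one]
        ring
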